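/- For every n ∈ ℕ^d and all decorated trees σ, τ: Ψ(σ ↷^n τ) = (1/n!)·Ψ(σ)·(D^{(n)}Ψ(τ)) in ℝ[coord]. -/

import Mathlib

open scoped Classical

noncomputable section

/-- The set of `d`-tuples of natural numbers, `ℕ^d`. -/
abbrev Nd (d : ℕ) : Type := Fin d → ℕ

/-- Multi-indices over `ℕ^d`. -/
abbrev MNd (d : ℕ) : Type := Nd d →₀ ℕ

/-- The coordinate set `coord = (𝔏 × M(ℕ^d)) ⊔ ℕ^d`, with `𝔏 = 𝔏⁻ ∪ {0}`
modelled as `Option Lm` (`none` playing the role of `0`). -/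
abbrev Coord (Lm : Type) (d : ℕ) : Type := (Option Lm × MNd d) ⊕ Nd d

/-- Multi-indices over `coord`. -/
abbrev MCoord (Lm : Type) (d : ℕ) : Type := Coord Lm d →₀ ℕ

/-- Decorated trees: `X n` for `n ∈ ℕ^d`, and `node l r ms ts` representing
`Ξ_l⟨(ms 0, ts 0), …, (ms (r-1), ts (r-1))⟩`. -/
inductive DTree (Lm : Type) (d : ℕ) : Type where
  | X : Nd d → DTree Lm d
  | node : Option Lm → (r : ℕ) → (Fin r → Nd d) → (Fin r → DTree Lm d) → DTree Lm d

variable {Lm : Type} {d : ℕ}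

/-- `n!` for `n ∈ ℕ^d`. -/
def factNd (n : Nd d) : ℕ := ∏ i, (n i).factorial

/-- `k!` for `k ∈ M(ℕ^d)`. -/
def factM (k : MNd d) : ℕ := k.prod fun _ v => v.factorial

/-- The multi-index `k = Σ_j e_{m_j}` of outgoing edge decorations. -/
def kOf {r : ℕ} (ms : Fin r → Nd d) : MNd d := ∑ j, Finsupp.single (ms j) 1

/-- The map `Ψ` on decorated trees. -/
def Psi : DTree Lm d → MvPolynomial (Coord Lm d) ℝ :=
  DTree.rec (motive := fun _ => MvPolynomial (Coord Lm d) ℝ)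
    (fun n => MvPolynomial.C (factNd n : ℝ) * MvPolynomial.X (Sum.inr n))
    (fun l r ms _ts ih =>
      MvPolynomial.C (factM (kOf ms) : ℝ) * MvPolynomial.X (Sum.inl (l, kOf ms)) *
        ∏ j : Fin r, (MvPolynomial.C (1 / (factNd (ms j) : ℝ)) * ih j))

/-- The multi-index `β(τ)` of a decorated tree. -/
def betaOf : DTree Lm d → MCoord Lm d :=
  DTree.rec (motive := fun _ => MCoord Lm d)
    (fun n => Finsupp.single (Sum.inr n) 1)
    (fun l r ms _ts ih =>
      Finsupp.single (Sum.inl (l, kOf ms)) 1 + ∑ j : Fin r, ih j)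

/-- The combinatorial coefficient `C(β)`. -/
def Ccoef (β : MCoord Lm d) : ℝ :=
  β.prod fun x v =>
    match x with
    | Sum.inl (_, k) =>
        ((factM k : ℝ) / (k.prod fun m vm => (factNd m : ℝ) ^ vm)) ^ v
    | Sum.inr n => ((factNd n : ℝ)) ^ v

/-- Grafting `σ ↷^n τ`, with values in the free vector space over decorated
trees (modelled as finitely supported functions `DTree Lm d →₀ ℝ`). -/
def graft (n : Nd d) (σ : DTree Lm d) : DTree Lm d → (DTree Lm d →₀ ℝ) :=
  DTree.rec (motive := fun _ => DTree Lm d →₀ ℝ)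
    (fun n' => if n = n' then Finsupp.single σ 1 else 0)
    (fun l r ms ts ih =>
      Finsupp.single (DTree.node l (r + 1) (Fin.cons n ms) (Fin.cons σ ts)) 1 +
      ∑ j : Fin r,
        (ih j).sum fun τ' c =>
          Finsupp.single (DTree.node l r ms (Function.update ts j τ')) c)

/-- Linear extension of `Ψ` to the free vector space over decorated trees. -/
def PsiHat (f : DTree Lm d →₀ ℝ) : MvPolynomial (Coord Lm d) ℝ :=
  f.sum fun τ c => c • Psi τ

/-- The derivation `D^{(n)}` of `ℝ[coord]` determined by
`D^{(n)} z_{(l,k)} = (k(n)+1)·z_{(l,k+e_n)}` and `D^{(n)} z_{n'} = δ_{n,n'}`. -/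
def derivD (n : Nd d) :
    Derivation ℝ (MvPolynomial (Coord Lm d) ℝ) (MvPolynomial (Coord Lm d) ℝ) :=
  MvPolynomial.mkDerivation ℝ fun ι =>
    match ι with
    | Sum.inl (l, k) =>
        MvPolynomial.C ((k n : ℝ) + 1) *
          MvPolynomial.X (Sum.inl (l, k + Finsupp.single n 1))
    | Sum.inr n' => if n = n' then 1 else 0

section
variable {Lm : Type} {d : ℕ}

lemma graft_X (n : Nd d) (σ : DTree Lm d) (n' : Nd d) :
    graft n σ (DTree.X n') = if n = n' then Finsupp.single σ 1 else 0 := rfl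

lemma graft_node (n : Nd d) (σ : DTree Lm d) (l : Option Lm) (r : ℕ)
    (ms : Fin r → Nd d) (ts : Fin r → DTree Lm d) :
    graft n σ (DTree.node l r ms ts) =
      Finsupp.single (DTree.node l (r + 1) (Fin.cons n ms) (Fin.cons σ ts)) 1 +
      ∑ j : Fin r,
        (graft n σ (ts j)).sum fun τ' c =>
          Finsupp.single (DTree.node l r ms (Function.update ts j τ')) c := rfl

lemma Psi_X (n : Nd d) : Psi (DTree.X n : DTree Lm d) =
    MvPolynomial.C (factNd n : ℝ) * MvPolynomial.X (Sum.inr n) := rfl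

lemma Psi_node (l : Option Lm) (r : ℕ) (ms : Fin r → Nd d) (ts : Fin r → DTree Lm d) :
    Psi (DTree.node l r ms ts) =
      MvPolynomial.C (factM (kOf ms) : ℝ) * MvPolynomial.X (Sum.inl (l, kOf ms)) *
        ∏ j : Fin r, (MvPolynomial.C (1 / (factNd (ms j) : ℝ)) * Psi (ts j)) := rfl

lemma PsiHat_eq (f : DTree Lm d →₀ ℝ) :
    PsiHat f = Finsupp.linearCombination ℝ Psi f :=
  (Finsupp.linearCombination_apply ℝ f).symm

lemma derivD_X_inl (n : Nd d) (l : Option Lm) (k : MNd d) :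
    derivD n (MvPolynomial.X (Sum.inl (l, k))) =
      MvPolynomial.C ((k n : ℝ) + 1) *
        MvPolynomial.X (Sum.inl (l, k + Finsupp.single n 1)) := by
  simp [derivD, MvPolynomial.mkDerivation_X]

lemma derivD_X_inr (n n' : Nd d) :
    derivD n (MvPolynomial.X (Sum.inr n') : MvPolynomial (Coord Lm d) ℝ) =
      if n = n' then 1 else 0 := by
  simp [derivD, MvPolynomial.mkDerivation_X]

end
section
variable {Lm : Type} {d : ℕ}

lemma factNd_pos (n : Nd d) : 0 < factNd n := Finset.prod_pos fun i _ => Nat.factorial_pos _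

lemma factNd_ne (n : Nd d) : (factNd n : ℝ) ≠ 0 := Nat.cast_ne_zero.mpr (factNd_pos n).ne'

lemma kOf_cons (n : Nd d) {r : ℕ} (ms : Fin r → Nd d) :
    kOf (Fin.cons n ms) = kOf ms + Finsupp.single n 1 := by
  rw [kOf, Fin.sum_univ_succ]
  simp [kOf, add_comm]

lemma factM_add_single (k : MNd d) (n : Nd d) :
    factM (k + Finsupp.single n 1) = (k n + 1) * factM k := by
  classical
  set K : MNd d := k + Finsupp.single n 1 with hK
  set s : Finset (Nd d) := insert n k.support with hs
  have hsub : k.support ⊆ s := Finset.subset_insert _ _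
  have hsub' : K.support ⊆ s := by
    refine (Finsupp.support_add).trans ?_
    refine Finset.union_subset hsub ?_
    exact (Finsupp.support_single_subset).trans (by simp [hs])
  have h1 : factM K = ∏ x ∈ s, (K x).factorial :=
    Finsupp.prod_of_support_subset _ hsub' _ (by simp)
  have h2 : factM k = ∏ x ∈ s, (k x).factorial :=
    Finsupp.prod_of_support_subset _ hsub _ (by simp)
  have hn : n ∈ s := Finset.mem_insert_self _ _
  rw [h1, h2, ← Finset.mul_prod_erase s _ hn, ← Finset.mul_prod_erase s _ hn]
  have he : ∀ x ∈ s.erase n, (K x).factorial = (k x).factorial := by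
    intro x hx
    have hxn : x ≠ n := Finset.ne_of_mem_erase hx
    simp [hK, Finsupp.single_apply, Ne.symm hxn]
  rw [Finset.prod_congr rfl he]
  have hKn : K n = k n + 1 := by simp [hK]
  rw [hKn, Nat.factorial_succ, mul_assoc]

lemma deriv_prod {A : Type*} [CommRing A] [Algebra ℝ A] (D : Derivation ℝ A A)
    {ι : Type*} [DecidableEq ι] (s : Finset ι) (f : ι → A) :
    D (∏ i ∈ s, f i) = ∑ i ∈ s, (∏ j ∈ s.erase i, f j) * D (f i) := by
  classical
  induction s using Finset.induction with
  | empty => simp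
  | insert a s' ha ih =>
    rw [Finset.prod_insert ha, Derivation.leibniz, smul_eq_mul, smul_eq_mul, ih,
      Finset.mul_sum, Finset.sum_insert ha, Finset.erase_insert ha, add_comm]
    congr 1
    refine Finset.sum_congr rfl fun i hi => ?_
    rw [Finset.erase_insert_of_ne (by rintro rfl; exact ha hi),
      Finset.prod_insert (fun h => ha (Finset.mem_of_mem_erase h)), mul_assoc]

end
section
variable {Lm : Type} {d : ℕ}

lemma PsiHat_def (f : DTree Lm d →₀ ℝ) : PsiHat f = f.sum fun τ c => c • Psi τ := rfl

lemma PsiHat_single (τ : DTree Lm d) (c : ℝ) : PsiHat (Finsupp.single τ c) = c • Psi τ := by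
  rw [PsiHat_eq, Finsupp.linearCombination_single]

lemma PsiHat_add (f g : DTree Lm d →₀ ℝ) : PsiHat (f + g) = PsiHat f + PsiHat g := by
  simp [PsiHat_eq]

lemma PsiHat_finset_sum {ι : Type*} (s : Finset ι) (F : ι → (DTree Lm d →₀ ℝ)) :
    PsiHat (∑ j ∈ s, F j) = ∑ j ∈ s, PsiHat (F j) := by
  simp [PsiHat_eq]

lemma PsiHat_mapped (f : DTree Lm d →₀ ℝ) (G : DTree Lm d → DTree Lm d) :
    PsiHat (f.sum fun τ c => Finsupp.single (G τ) c) = f.sum fun τ c => c • Psi (G τ) := by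
  rw [PsiHat_eq, map_finsuppSum]
  simp [Finsupp.linearCombination_single]

lemma derivD_C_mul (n : Nd d) (a : ℝ) (q : MvPolynomial (Coord Lm d) ℝ) :
    derivD n (MvPolynomial.C a * q) = MvPolynomial.C a * derivD n q := by
  rw [← MvPolynomial.smul_eq_C_mul, Derivation.map_smul, MvPolynomial.smul_eq_C_mul]

end
theorem stmt19 {Lm : Type} [Fintype Lm] {d : ℕ} (hd : 1 ≤ d)
    (n : Nd d) (σ τ : DTree Lm d) :
    PsiHat (graft n σ τ) =
      MvPolynomial.C (1 / (factNd n : ℝ)) * (Psi σ * derivD n (Psi τ)) := by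
  classical
  induction τ with
  | X n' =>
    rw [graft_X, Psi_X]
    have hD : derivD n (MvPolynomial.C (factNd n' : ℝ) * MvPolynomial.X (Sum.inr n'))
        = MvPolynomial.C (factNd n' : ℝ) * (if n = n' then 1 else 0 : MvPolynomial (Coord Lm d) ℝ) := by
      rw [derivD_C_mul, derivD_X_inr]
    rw [hD]
    by_cases h : n = n'
    · subst h
      rw [if_pos rfl, if_pos rfl, PsiHat_single, one_smul, mul_one, mul_comm (Psi σ),
        ← mul_assoc, ← MvPolynomial.C_mul, one_div_mul_cancel (factNd_ne n),
        MvPolynomial.C_1, one_mul]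
    · simp [h, PsiHat]
  | node l r ms ts ih =>
    -- abbreviations (written out in full in statements)
    have hg : ∀ j : Fin r,
        derivD n (MvPolynomial.C (1 / (factNd (ms j) : ℝ)) * Psi (ts j))
          = MvPolynomial.C (1 / (factNd (ms j) : ℝ)) * derivD n (Psi (ts j)) :=
      fun j => derivD_C_mul n _ _
    have hD : derivD n (Psi (DTree.node l r ms ts)) =
        MvPolynomial.C (factM (kOf ms) : ℝ) *
          (MvPolynomial.C ((kOf ms n : ℝ) + 1) *
              MvPolynomial.X (Sum.inl (l, kOf ms + Finsupp.single n 1)) *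
              (∏ j : Fin r, (MvPolynomial.C (1 / (factNd (ms j) : ℝ)) * Psi (ts j)))
           + MvPolynomial.X (Sum.inl (l, kOf ms)) *
              ∑ j : Fin r,
                (∏ i ∈ Finset.univ.erase j,
                  (MvPolynomial.C (1 / (factNd (ms i) : ℝ)) * Psi (ts i))) *
                (MvPolynomial.C (1 / (factNd (ms j) : ℝ)) * derivD n (Psi (ts j)))) := by
      rw [Psi_node, mul_assoc, derivD_C_mul, Derivation.leibniz, deriv_prod, derivD_X_inl]
      simp only [smul_eq_mul, hg]
      ring
    have hT1 : Psi (DTree.node l (r + 1) (Fin.cons n ms) (Fin.cons σ ts)) =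
        MvPolynomial.C (1 / (factNd n : ℝ)) *
          (Psi σ * (MvPolynomial.C (factM (kOf ms) : ℝ) *
            (MvPolynomial.C ((kOf ms n : ℝ) + 1) *
              MvPolynomial.X (Sum.inl (l, kOf ms + Finsupp.single n 1)) *
              ∏ j : Fin r, (MvPolynomial.C (1 / (factNd (ms j) : ℝ)) * Psi (ts j))))) := by
      rw [Psi_node, kOf_cons, factM_add_single]
      have hprod : (∏ j : Fin (r + 1),
          (MvPolynomial.C (1 / (factNd ((Fin.cons n ms : Fin (r+1) → Nd d) j) : ℝ)) * Psi ((Fin.cons σ ts : Fin (r+1) → DTree Lm d) j)))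
          = (MvPolynomial.C (1 / (factNd n : ℝ)) * Psi σ) *
            ∏ j : Fin r, (MvPolynomial.C (1 / (factNd (ms j) : ℝ)) * Psi (ts j)) := by
        rw [Fin.prod_univ_succ]
        simp
      rw [hprod]
      push_cast
      simp only [MvPolynomial.C_mul, MvPolynomial.C_add, MvPolynomial.C_1]
      ring
    have hU : ∀ j : Fin r,
        PsiHat ((graft n σ (ts j)).sum fun τ' c =>
            Finsupp.single (DTree.node l r ms (Function.update ts j τ')) c)
          = MvPolynomial.C (1 / (factNd n : ℝ)) *
              (Psi σ * (MvPolynomial.C (factM (kOf ms) : ℝ) *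
                (MvPolynomial.X (Sum.inl (l, kOf ms)) *
                  ((∏ i ∈ Finset.univ.erase j,
                      (MvPolynomial.C (1 / (factNd (ms i) : ℝ)) * Psi (ts i))) *
                    (MvPolynomial.C (1 / (factNd (ms j) : ℝ)) * derivD n (Psi (ts j))))))) := by
      intro j
      rw [PsiHat_mapped]
      have hB : ∀ τ' : DTree Lm d, Psi (DTree.node l r ms (Function.update ts j τ')) =
          (MvPolynomial.C (factM (kOf ms) : ℝ) * MvPolynomial.X (Sum.inl (l, kOf ms)) *
            (MvPolynomial.C (1 / (factNd (ms j) : ℝ)) *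
              ∏ i ∈ Finset.univ.erase j,
                (MvPolynomial.C (1 / (factNd (ms i) : ℝ)) * Psi (ts i)))) * Psi τ' := by
        intro τ'
        rw [Psi_node,
          ← Finset.mul_prod_erase Finset.univ _ (Finset.mem_univ j)]
        have he : ∀ i ∈ Finset.univ.erase j,
            MvPolynomial.C (1 / (factNd (ms i) : ℝ)) * Psi (Function.update ts j τ' i)
              = MvPolynomial.C (1 / (factNd (ms i) : ℝ)) * Psi (ts i) := by
          intro i hi
          rw [Function.update_of_ne (Finset.ne_of_mem_erase hi)]
        rw [Finset.prod_congr rfl he, Function.update_self]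
        ring
      simp only [hB, ← mul_smul_comm]
      rw [← Finsupp.mul_sum, ← PsiHat_def, ih j]
      ring
    rw [graft_node, PsiHat_add, PsiHat_single, one_smul, PsiHat_finset_sum, hT1,
      Finset.sum_congr rfl fun j _ => hU j, hD]
    simp only [mul_add, Finset.mul_sum]
end
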